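/- (Existence of an optimal deterministic stationary policy, Theorem 6.2.10 of Puterman, finite case.) There exists a stationary deterministic policy μ* : S → A such that J_{μ*} = J*; consequently, for every x ∈ S, J*(x) = min over all stationary deterministic policies μ of J_μ(x), and the minimum is attained by μ* simultaneously for all states. -/

import Mathlib

/-- The Bellman operator `T` of the finite discounted MDP. -/
noncomputable def Tbell {S A : Type*} [Fintype S] [Fintype A] [Nonempty A]
    (P : S → A → S → ℝ) (g : S → A → ℝ) (α : ℝ) (J : S → ℝ) : S → ℝ :=
  fun x => Finset.univ.inf' Finset.univ_nonempty
    (fun a : A => g x a + α * ∑ y, P x a y * J y)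

/-- The transition matrix `P_μ` of a stationary deterministic policy `μ`. -/
def Pmat {S A : Type*} (P : S → A → S → ℝ) (μ : S → A) : Matrix S S ℝ :=
  fun x y => P x (μ x) y

/-- The stage-cost vector `g_μ` of a stationary deterministic policy `μ`. -/
def gvec {S A : Type*} (g : S → A → ℝ) (μ : S → A) : S → ℝ :=
  fun x => g x (μ x)

/-- The value function `J_μ(x) = ∑_{t} α^t (P_μ^t g_μ)(x)` of policy `μ`. -/
noncomputable def Jval {S A : Type*} [Fintype S] [DecidableEq S]
    (P : S → A → S → ℝ) (g : S → A → ℝ) (α : ℝ) (μ : S → A) : S → ℝ :=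
  fun x => ∑' t : ℕ, α ^ t * ((Pmat P μ ^ t).mulVec (gvec g μ)) x


set_option linter.unusedSectionVars false

section helpers
variable {S : Type*} [Fintype S] [Nonempty S] [DecidableEq S]

lemma stoch_pow (M : Matrix S S ℝ) (h0 : ∀ x y, 0 ≤ M x y) (h1 : ∀ x, ∑ y, M x y = 1) :
    ∀ t : ℕ, (∀ x y, 0 ≤ (M ^ t) x y) ∧ (∀ x, ∑ y, (M ^ t) x y = 1) := by
  intro t
  induction t with
  | zero =>
    constructor
    · intro x y; simp [Matrix.one_apply]; positivity
    · intro x; simp [Matrix.one_apply]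
  | succ t ih =>
    constructor
    · intro x y
      rw [pow_succ, Matrix.mul_apply]
      exact Finset.sum_nonneg fun z _ => mul_nonneg (ih.1 x z) (h0 z y)
    · intro x
      simp only [pow_succ, Matrix.mul_apply]
      rw [Finset.sum_comm]
      calc ∑ z, ∑ y, (M ^ t) x z * M z y = ∑ z, (M ^ t) x z * ∑ y, M z y := by
            simp [Finset.mul_sum]
        _ = 1 := by simp [h1, ih.2]

lemma core_le (M : Matrix S S ℝ) (h0 : ∀ x y, 0 ≤ M x y) (h1 : ∀ x, ∑ y, M x y = 1)
    {α : ℝ} (hα0 : 0 < α) (hα1 : α < 1) (e : S → ℝ)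
    (he : ∀ x, e x ≤ α * ∑ y, M x y * e y) : ∀ x, e x ≤ 0 := by
  set m := Finset.univ.sup' Finset.univ_nonempty e with hm
  have hub : ∀ x, e x ≤ m := fun x => Finset.le_sup' _ (Finset.mem_univ x)
  have key : ∀ x, e x ≤ α * m := by
    intro x
    refine (he x).trans ?_
    apply mul_le_mul_of_nonneg_left _ hα0.le
    calc ∑ y, M x y * e y ≤ ∑ y, M x y * m :=
          Finset.sum_le_sum fun y _ => mul_le_mul_of_nonneg_left (hub y) (h0 x y)
      _ = m := by rw [← Finset.sum_mul, h1, one_mul]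
  obtain ⟨x0, -, hx0⟩ := Finset.exists_mem_eq_sup' (Finset.univ_nonempty (α := S)) e
  have hmle : m ≤ α * m := by have := key x0; rwa [← hx0] at this
  have : m ≤ 0 := by nlinarith
  exact fun x => (hub x).trans this

lemma summable_term (M : Matrix S S ℝ) (h0 : ∀ x y, 0 ≤ M x y) (h1 : ∀ x, ∑ y, M x y = 1)
    {α : ℝ} (hα0 : 0 < α) (hα1 : α < 1) (v : S → ℝ) (x : S) :
    Summable (fun t : ℕ => α ^ t * ((M ^ t).mulVec v) x) := by
  set C := Finset.univ.sup' Finset.univ_nonempty (fun y => |v y|) with hC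
  have hC0 : 0 ≤ C := by
    rw [hC]
    exact le_trans (abs_nonneg (v (Classical.arbitrary S)))
      (Finset.le_sup' (fun y => |v y|) (Finset.mem_univ (Classical.arbitrary S)))
  have hb : ∀ (t : ℕ) (z : S), |((M ^ t).mulVec v) z| ≤ C := by
    intro t z
    have hst := stoch_pow M h0 h1 t
    calc |((M ^ t).mulVec v) z| = |∑ y, (M ^ t) z y * v y| := rfl
      _ ≤ ∑ y, |(M ^ t) z y * v y| := Finset.abs_sum_le_sum_abs _ _
      _ ≤ ∑ y, (M ^ t) z y * C := by
          refine Finset.sum_le_sum fun y _ => ?_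
          rw [abs_mul, abs_of_nonneg (hst.1 z y), hC]
          exact mul_le_mul_of_nonneg_left (Finset.le_sup' (fun y => |v y|) (Finset.mem_univ y)) (hst.1 z y)
      _ = C := by rw [← Finset.sum_mul, hst.2, one_mul]
  refine Summable.of_norm_bounded
    ((summable_geometric_of_lt_one hα0.le hα1).mul_left C) fun t => ?_
  rw [Real.norm_eq_abs, abs_mul, abs_pow, abs_of_nonneg hα0.le, mul_comm]
  exact mul_le_mul_of_nonneg_right (hb t x) (by positivity)

lemma Jfix (M : Matrix S S ℝ) (h0 : ∀ x y, 0 ≤ M x y) (h1 : ∀ x, ∑ y, M x y = 1)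
    {α : ℝ} (hα0 : 0 < α) (hα1 : α < 1) (v : S → ℝ) (x : S) :
    (∑' t : ℕ, α ^ t * ((M ^ t).mulVec v) x)
      = v x + α * ∑ y, M x y * (∑' t : ℕ, α ^ t * ((M ^ t).mulVec v) y) := by
  have hs := fun z => summable_term M h0 h1 hα0 hα1 v z
  rw [Summable.tsum_eq_zero_add (hs x)]
  congr 1
  · simp [Matrix.one_mulVec]
  have step : ∀ t : ℕ, α ^ (t + 1) * ((M ^ (t + 1)).mulVec v) x
      = ∑ y, α * (M x y * (α ^ t * ((M ^ t).mulVec v) y)) := by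
    intro t
    rw [pow_succ' M t, ← Matrix.mulVec_mulVec]
    have : (M.mulVec ((M ^ t).mulVec v)) x = ∑ y, M x y * ((M ^ t).mulVec v) y := rfl
    rw [this, Finset.mul_sum]
    ring_nf
  calc (∑' t : ℕ, α ^ (t + 1) * ((M ^ (t + 1)).mulVec v) x)
      = ∑' t : ℕ, ∑ y, α * (M x y * (α ^ t * ((M ^ t).mulVec v) y)) := by
        exact tsum_congr step
    _ = ∑ y, ∑' t : ℕ, α * (M x y * (α ^ t * ((M ^ t).mulVec v) y)) := by
        refine Summable.tsum_finsetSum fun y _ => ?_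
        exact (((hs y).mul_left _).mul_left _)
    _ = α * ∑ y, M x y * (∑' t : ℕ, α ^ t * ((M ^ t).mulVec v) y) := by
        rw [Finset.mul_sum]
        refine Finset.sum_congr rfl fun y _ => ?_
        rw [tsum_mul_left, tsum_mul_left]
end helpers


theorem stmt_10 {S A : Type*} [Fintype S] [Nonempty S] [DecidableEq S] [Fintype A] [Nonempty A]
    (P : S → A → S → ℝ) (g : S → A → ℝ) (α : ℝ)
    (hP0 : ∀ x a y, 0 ≤ P x a y) (hP1 : ∀ x a, ∑ y, P x a y = 1)
    (hα0 : 0 < α) (hα1 : α < 1)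
    (Jstar : S → ℝ) (hJstar : Tbell P g α Jstar = Jstar) :
    ∃ μstar : S → A, Jval P g α μstar = Jstar ∧
      ∀ x : S, Jstar x =
        Finset.univ.inf' Finset.univ_nonempty (fun μ : S → A => Jval P g α μ x) := by
  -- fixed point equation for every policy
  have hfix : ∀ (μ : S → A) (x : S),
      Jval P g α μ x = gvec g μ x + α * ∑ y, Pmat P μ x y * Jval P g α μ y := by
    intro μ x
    exact Jfix (Pmat P μ) (fun x y => hP0 x (μ x) y) (fun x => hP1 x (μ x)) hα0 hα1 (gvec g μ) x
  -- Jstar ≤ Jval μ for every μ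
  have hle : ∀ (μ : S → A) (x : S), Jstar x ≤ Jval P g α μ x := by
    intro μ
    have hT : ∀ x, Jstar x ≤ g x (μ x) + α * ∑ y, P x (μ x) y * Jstar y := by
      intro x
      conv_lhs => rw [← hJstar]
      exact Finset.inf'_le _ (Finset.mem_univ (μ x))
    have := core_le (Pmat P μ) (fun x y => hP0 x (μ x) y) (fun x => hP1 x (μ x)) hα0 hα1
      (fun x => Jstar x - Jval P g α μ x) ?_
    · intro x; linarith [this x]
    · intro x
      have h2 := hfix μ x
      have h3 : ∑ y, Pmat P μ x y * (Jstar y - Jval P g α μ y)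
          = ∑ y, Pmat P μ x y * Jstar y - ∑ y, Pmat P μ x y * Jval P g α μ y := by
        rw [← Finset.sum_sub_distrib]; exact Finset.sum_congr rfl fun y _ => by ring
      have h4 := hT x
      simp only [Pmat, gvec] at *
      rw [h3]; rw [mul_sub]; linarith
  -- the greedy policy
  classical
  have hex : ∀ x : S, ∃ a : A, (Finset.univ.inf' Finset.univ_nonempty
      (fun a : A => g x a + α * ∑ y, P x a y * Jstar y))
      = g x a + α * ∑ y, P x a y * Jstar y := by
    intro x
    obtain ⟨a, -, ha⟩ := Finset.exists_mem_eq_inf' (Finset.univ_nonempty (α := A))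
      (fun a : A => g x a + α * ∑ y, P x a y * Jstar y)
    exact ⟨a, ha⟩
  choose μstar hμstar using hex
  have hgreedy : ∀ x, Jstar x = g x (μstar x) + α * ∑ y, P x (μstar x) y * Jstar y := by
    intro x
    conv_lhs => rw [← hJstar]
    exact hμstar x
  -- Jval μstar = Jstar
  have heq : Jval P g α μstar = Jstar := by
    funext x
    refine le_antisymm ?_ (hle μstar x)
    have := core_le (Pmat P μstar) (fun x y => hP0 x (μstar x) y) (fun x => hP1 x (μstar x))
      hα0 hα1 (fun x => Jval P g α μstar x - Jstar x) ?_
    · linarith [this x]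
    · intro z
      have h2 := hfix μstar z
      have h3 : ∑ y, Pmat P μstar z y * (Jval P g α μstar y - Jstar y)
          = ∑ y, Pmat P μstar z y * Jval P g α μstar y
            - ∑ y, Pmat P μstar z y * Jstar y := by
        rw [← Finset.sum_sub_distrib]; exact Finset.sum_congr rfl fun y _ => by ring
      have h4 := hgreedy z
      simp only [Pmat, gvec] at *
      rw [h3, mul_sub]; linarith
  refine ⟨μstar, heq, fun x => ?_⟩
  refine le_antisymm (Finset.le_inf' _ _ fun μ _ => hle μ x) ?_
  have := Finset.inf'_le (fun μ : S → A => Jval P g α μ x) (Finset.mem_univ μstar)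
  rw [heq] at this
  exact this
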